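/- Let {A_i}_{i∈E} satisfy the Fano-non-Fano condition with abelian group labeling (𝒜, {θ_i}_{i∈E}), and let g : 𝒜 → 𝒜 be an endomorphism. Define U := θ_1(A_1) − g(θ_2(A_2)), V := θ_1(A_1) − g(θ_2(A_2)) − g(θ_3(A_3)), and W := θ_1(A_1) − g(θ_2(A_2)) + θ_3(A_3). Then the supports of U, V, W each have cardinality |𝒜|, and U ≐ A_1 | A_2, V ≐ A_1 | A_23, U ≐ V | A_3, W ≐ A_13 | A_2, and U ≐ W | A_3 hold. -/

import Mathlib

open scoped Classical

noncomputable section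

/-- The probability of the event `S` under the probability mass function `p`. -/
def Pr {Ω : Type} (p : Ω → ℝ) (S : Set Ω) : ℝ := ∑' ω : S, p ω

/-- `p` is a probability mass function on the sample space `Ω`. -/
def IsProb {Ω : Type} (p : Ω → ℝ) : Prop := (∀ ω, 0 ≤ p ω) ∧ Pr p Set.univ = 1

/-- The support of a random variable `X`: the set of values attained with positive
probability. -/
def supp {Ω α : Type} (p : Ω → ℝ) (X : Ω → α) : Set α := {a | 0 < Pr p {ω | X ω = a}}

/-- `X` is almost surely a function of `Y` (written `X ≤ι Y` in the paper). -/
def FuncOf {Ω α β : Type} (p : Ω → ℝ) (X : Ω → α) (Y : Ω → β) : Prop :=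
  ∃ f : β → α, Pr p {ω | X ω = f (Y ω)} = 1

/-- The random variables `X` and `Y` are independent. -/
def IndepRV {Ω α β : Type} (p : Ω → ℝ) (X : Ω → α) (Y : Ω → β) : Prop :=
  ∀ (a : α) (b : β), Pr p {ω | X ω = a ∧ Y ω = b} = Pr p {ω | X ω = a} * Pr p {ω | Y ω = b}

/-- The random variables `X`, `Y`, `Z` are mutually independent:
`X ⟂ Y` and `(X, Y) ⟂ Z`. -/
def Indep3 {Ω α β γ : Type} (p : Ω → ℝ) (X : Ω → α) (Y : Ω → β) (Z : Ω → γ) : Prop :=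
  IndepRV p X Y ∧ IndepRV p (fun ω => (X ω, Y ω)) Z

/-- The predicate `tri(X, Y, Z)`: each variable is a.s. a function of the other two, and the
three variables are pairwise independent. -/
def tri {Ω α β γ : Type} (p : Ω → ℝ) (X : Ω → α) (Y : Ω → β) (Z : Ω → γ) : Prop :=
  FuncOf p X (fun ω => (Y ω, Z ω)) ∧ FuncOf p Y (fun ω => (X ω, Z ω)) ∧
    FuncOf p Z (fun ω => (X ω, Y ω)) ∧
    IndepRV p X Y ∧ IndepRV p X Z ∧ IndepRV p Y Z

/- The ground set `E = {1,2,3,12,13,23,123}` is represented by `Fin 7`, where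
`0 ↦ 1`, `1 ↦ 2`, `2 ↦ 3`, `3 ↦ 12`, `4 ↦ 13`, `5 ↦ 23`, `6 ↦ 123`. -/

/-- `{i,j,k}` is one of the dependent 3-sets of the non-Fano matroid, i.e. one of
`{1,2,12}, {1,3,13}, {2,3,23}, {1,23,123}, {2,13,123}, {3,12,123}`. -/
def inDN (i j k : Fin 7) : Prop :=
  ({i, j, k} : Finset (Fin 7)) ∈
    ({{0, 1, 3}, {0, 2, 4}, {1, 2, 5}, {0, 5, 6}, {1, 4, 6}, {2, 3, 6}} :
      Finset (Finset (Fin 7)))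

/-- `{i,j,k}` is a dependent 3-set of the Fano matroid (`D_F = D_N ∪ {{12,13,23}}`). -/
def inDF (i j k : Fin 7) : Prop :=
  inDN i j k ∨ ({i, j, k} : Finset (Fin 7)) = {3, 4, 5}

/-- `{i,j,k}` is an independent 3-set of the Fano matroid: a 3-element subset of `E`
not in `D_F`. -/
def inIF (i j k : Fin 7) : Prop :=
  ({i, j, k} : Finset (Fin 7)).card = 3 ∧ ¬ inDF i j k

/-- The Fano-non-Fano condition on the seven random variables `A 0, …, A 6`
(representing `A_1, A_2, A_3, A_12, A_13, A_23, A_123`): `tri` holds for every triple in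
`D_N`, and mutual independence holds for every triple in `I_F`. -/
def fnf {Ω : Type} (p : Ω → ℝ) {α : Fin 7 → Type} (A : ∀ i, Ω → α i) : Prop :=
  (∀ i j k, inDN i j k → tri p (A i) (A j) (A k)) ∧
  (∀ i j k, inIF i j k → Indep3 p (A i) (A j) (A k))

/-- `(𝒜, θ)` is an abelian group labeling of `A 0, …, A 6`: `𝒜` is an abelian group,
each `θ i` is a bijection from the support of `A i` onto `𝒜`, and almost surely
`θ_12(A_12) = θ_1(A_1) + θ_2(A_2)`, `θ_13(A_13) = θ_1(A_1) + θ_3(A_3)`,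
`θ_23(A_23) = θ_2(A_2) + θ_3(A_3)`, `θ_123(A_123) = θ_1(A_1) + θ_2(A_2) + θ_3(A_3)`. -/
def IsAbelianLabeling {Ω : Type} (p : Ω → ℝ) {α : Fin 7 → Type} (A : ∀ i, Ω → α i)
    (𝒜 : Type) [AddCommGroup 𝒜] (θ : ∀ i, α i → 𝒜) : Prop :=
  (∀ i, Set.BijOn (θ i) (supp p (A i)) Set.univ) ∧
  Pr p {ω | θ 3 (A 3 ω) = θ 0 (A 0 ω) + θ 1 (A 1 ω)
      ∧ θ 4 (A 4 ω) = θ 0 (A 0 ω) + θ 2 (A 2 ω)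
      ∧ θ 5 (A 5 ω) = θ 1 (A 1 ω) + θ 2 (A 2 ω)
      ∧ θ 6 (A 6 ω) = θ 0 (A 0 ω) + θ 1 (A 1 ω) + θ 2 (A 2 ω)} = 1

/-- `X ≐ Y | Z`: given `Z`, the random variables `X` and `Y` carry the same information,
i.e. `X ≤ι (Z, Y)` and `Y ≤ι (Z, X)`. -/
def eqGiven {Ω α β γ : Type} (p : Ω → ℝ) (X : Ω → α) (Y : Ω → β) (Z : Ω → γ) : Prop :=
  FuncOf p X (fun ω => (Z ω, Y ω)) ∧ FuncOf p Y (fun ω => (Z ω, X ω))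


section AuxPr

variable {Ω : Type} {p : Ω → ℝ}

private lemma pr_eq (S : Set Ω) : Pr p S = ∑' ω, S.indicator p ω := tsum_subtype S p

private lemma summable_of_isProb (hp : IsProb p) : Summable p := by
  by_contra h
  have h0 : Pr p Set.univ = 0 := by
    rw [pr_eq]
    simp only [Set.indicator_univ]
    exact tsum_eq_zero_of_not_summable h
  rw [hp.2] at h0; norm_num at h0

private lemma pr_nonneg (hp : IsProb p) (S : Set Ω) : 0 ≤ Pr p S :=
  tsum_nonneg fun ω => hp.1 ω

private lemma pr_mono (hp : IsProb p) {S T : Set Ω} (h : S ⊆ T) : Pr p S ≤ Pr p T := by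
  rw [pr_eq, pr_eq]
  refine Summable.tsum_le_tsum (fun ω => ?_) ((summable_of_isProb hp).indicator S)
    ((summable_of_isProb hp).indicator T)
  exact Set.indicator_le_indicator_of_subset h (fun a => hp.1 a) ω

private lemma pr_le_one (hp : IsProb p) (S : Set Ω) : Pr p S ≤ 1 := by
  have := pr_mono hp (Set.subset_univ S); rwa [hp.2] at this

private lemma pr_add_compl (hp : IsProb p) (S : Set Ω) : Pr p S + Pr p Sᶜ = 1 := by
  rw [pr_eq, pr_eq, ← Summable.tsum_add ((summable_of_isProb hp).indicator S)
    ((summable_of_isProb hp).indicator Sᶜ)]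
  rw [← hp.2, pr_eq]
  congr 1; funext ω
  by_cases h : ω ∈ S <;> simp [Set.indicator, h]

private lemma pr_union_le (hp : IsProb p) (S T : Set Ω) :
    Pr p (S ∪ T) ≤ Pr p S + Pr p T := by
  rw [pr_eq, pr_eq, pr_eq, ← Summable.tsum_add ((summable_of_isProb hp).indicator S)
    ((summable_of_isProb hp).indicator T)]
  refine Summable.tsum_le_tsum (fun ω => ?_) ((summable_of_isProb hp).indicator _)
    (((summable_of_isProb hp).indicator S).add ((summable_of_isProb hp).indicator T))
  by_cases h1 : ω ∈ S <;> by_cases h2 : ω ∈ T <;>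
    simp [Set.indicator, h1, h2, hp.1 ω]

private lemma pr_superset (hp : IsProb p) {S T : Set Ω} (h : S ⊆ T) (hS : Pr p S = 1) :
    Pr p T = 1 :=
  le_antisymm (pr_le_one hp T) (hS ▸ pr_mono hp h)

private lemma pr_inter (hp : IsProb p) {S T : Set Ω} (hS : Pr p S = 1) (hT : Pr p T = 1) :
    Pr p (S ∩ T) = 1 := by
  have hSc : Pr p Sᶜ = 0 := by have := pr_add_compl hp S; linarith
  have hTc : Pr p Tᶜ = 0 := by have := pr_add_compl hp T; linarith
  have hc : Pr p (S ∩ T)ᶜ = 0 := by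
    rw [Set.compl_inter]
    have h1 := pr_union_le hp Sᶜ Tᶜ
    have h2 := pr_nonneg hp (Sᶜ ∪ Tᶜ)
    linarith
  have := pr_add_compl hp (S ∩ T); linarith

private lemma le_pr_single (hp : IsProb p) {S : Set Ω} {ω : Ω} (h : ω ∈ S) :
    p ω ≤ Pr p S := by
  rw [Pr]
  exact Summable.le_tsum ((summable_of_isProb hp).subtype S) (⟨ω, h⟩ : S) (fun j _ => hp.1 j.1)

private lemma pr_mem_supp (hp : IsProb p) {α : Type} (X : Ω → α) :
    Pr p {ω | X ω ∈ supp p X} = 1 := by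
  have hz : ∀ ω, X ω ∉ supp p X → p ω = 0 := by
    intro ω h
    have h1 : p ω ≤ Pr p {ω' | X ω' = X ω} := le_pr_single hp rfl
    have h2 : ¬ 0 < Pr p {ω' | X ω' = X ω} := h
    have := hp.1 ω
    push_neg at h2
    linarith
  rw [pr_eq, ← hp.2, pr_eq]
  congr 1; funext ω
  simp only [Set.indicator_univ]
  by_cases h : X ω ∈ supp p X
  · simp [Set.indicator, h]
  · simp [Set.indicator, h, hz ω h]

private lemma pr_triple {α β γ : Type} {X : Ω → α} {Y : Ω → β} {Z : Ω → γ}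
    (h : Indep3 p X Y Z) (a : α) (b : β) (c : γ) :
    Pr p {ω | X ω = a ∧ Y ω = b ∧ Z ω = c} =
      Pr p {ω | X ω = a} * Pr p {ω | Y ω = b} * Pr p {ω | Z ω = c} := by
  have h2 := h.2 (a, b) c
  have hset : {ω | X ω = a ∧ Y ω = b ∧ Z ω = c} =
      {ω | (X ω, Y ω) = (a, b) ∧ Z ω = c} := by
    ext ω; simp [Prod.ext_iff, and_assoc]
  have hset2 : {ω | (X ω, Y ω) = (a, b)} = {ω | X ω = a ∧ Y ω = b} := by
    ext ω; simp [Prod.ext_iff]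
  rw [hset, h2, hset2, h.1 a b]

end AuxPr

/-- Proposition `end_to_fnf`: given `{A_i}_{i∈E}` satisfying the
Fano-non-Fano condition with abelian group labeling `(𝒜, {θ_i})` and an endomorphism
`g : 𝒜 → 𝒜`, the random variables `U := θ_1(A_1) − g(θ_2(A_2))`,
`V := θ_1(A_1) − g(θ_2(A_2)) − g(θ_3(A_3))`, `W := θ_1(A_1) − g(θ_2(A_2)) + θ_3(A_3)`
have supports of cardinality `|𝒜|` and satisfy `U ≐ A_1 | A_2`, `V ≐ A_1 | A_23`,
`U ≐ V | A_3`, `W ≐ A_13 | A_2`, `U ≐ W | A_3`. -/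
theorem end_to_fnf {Ω : Type} (p : Ω → ℝ) (hp : IsProb p)
    {α : Fin 7 → Type} (A : ∀ i, Ω → α i) (hfin : ∀ i, (supp p (A i)).Finite)
    (𝒜 : Type) [Fintype 𝒜] [AddCommGroup 𝒜] (θ : ∀ i, α i → 𝒜)
    (hfnf : fnf p A) (hlab : IsAbelianLabeling p A 𝒜 θ)
    (g : 𝒜 → 𝒜) (hg : ∀ a b : 𝒜, g (a + b) = g a + g b) :
    let U : Ω → 𝒜 := fun ω => θ 0 (A 0 ω) - g (θ 1 (A 1 ω))
    let V : Ω → 𝒜 := fun ω => θ 0 (A 0 ω) - g (θ 1 (A 1 ω)) - g (θ 2 (A 2 ω))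
    let W : Ω → 𝒜 := fun ω => θ 0 (A 0 ω) - g (θ 1 (A 1 ω)) + θ 2 (A 2 ω)
    ((supp p U).ncard = Fintype.card 𝒜 ∧
      (supp p V).ncard = Fintype.card 𝒜 ∧
      (supp p W).ncard = Fintype.card 𝒜) ∧
    eqGiven p U (A 0) (A 1) ∧
    eqGiven p V (A 0) (A 5) ∧
    eqGiven p U V (A 2) ∧
    eqGiven p W (A 4) (A 1) ∧
    eqGiven p U W (A 2) := by
  intro U V W
  obtain ⟨hbij, hL⟩ := hlab
  have hUdef : ∀ ω, U ω = θ 0 (A 0 ω) - g (θ 1 (A 1 ω)) := fun ω => rfl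
  have hVdef : ∀ ω, V ω = θ 0 (A 0 ω) - g (θ 1 (A 1 ω)) - g (θ 2 (A 2 ω)) := fun ω => rfl
  have hWdef : ∀ ω, W ω = θ 0 (A 0 ω) - g (θ 1 (A 1 ω)) + θ 2 (A 2 ω) := fun ω => rfl
  have hne : ∀ i, (supp p (A i)).Nonempty := by
    intro i
    obtain ⟨x, hx, -⟩ := (hbij i).surjOn (Set.mem_univ (0 : 𝒜))
    exact ⟨x, hx⟩
  have hsurj : ∀ i (a : 𝒜), ∃ x ∈ supp p (A i), θ i x = a := by
    intro i a
    obtain ⟨x, hx, hxa⟩ := (hbij i).surjOn (Set.mem_univ a)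
    exact ⟨x, hx, hxa⟩
  haveI h0ne : Nonempty (α 0) := ⟨(hne 0).choose⟩
  haveI h4ne : Nonempty (α 4) := ⟨(hne 4).choose⟩
  set inv0 : 𝒜 → α 0 := Function.invFunOn (θ 0) (supp p (A 0)) with hinv0def
  set inv4 : 𝒜 → α 4 := Function.invFunOn (θ 4) (supp p (A 4)) with hinv4def
  have hinv0 : ∀ x ∈ supp p (A 0), inv0 (θ 0 x) = x := fun x hx =>
    (hbij 0).injOn.leftInvOn_invFunOn hx
  have hinv4 : ∀ x ∈ supp p (A 4), inv4 (θ 4 x) = x := fun x hx =>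
    (hbij 4).injOn.leftInvOn_invFunOn hx
  have hIF : inIF 0 1 2 := by unfold inIF inDF inDN; decide
  have h3 := hfnf.2 0 1 2 hIF
  have hmem : ∀ i (x : α i), x ∈ supp p (A i) → 0 < Pr p {ω | A i ω = x} := by
    intro i x hx; exact hx
  -- positivity of the supports
  have hposU : ∀ u : 𝒜, 0 < Pr p {ω | U ω = u} := by
    intro u
    obtain ⟨b, hb⟩ := hne 1
    obtain ⟨x, hx, hxe⟩ := hsurj 0 (u + g (θ 1 b))
    have hsub : {ω | A 0 ω = x ∧ A 1 ω = b} ⊆ {ω | U ω = u} := by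
      rintro ω ⟨h1, h2⟩
      show U ω = u
      rw [hUdef, h1, h2, hxe]; abel
    have hpos : 0 < Pr p {ω | A 0 ω = x ∧ A 1 ω = b} := by
      rw [h3.1 x b]; exact mul_pos (hmem 0 x hx) (hmem 1 b hb)
    exact lt_of_lt_of_le hpos (pr_mono hp hsub)
  have hposV : ∀ v : 𝒜, 0 < Pr p {ω | V ω = v} := by
    intro v
    obtain ⟨b, hb⟩ := hne 1
    obtain ⟨c, hc⟩ := hne 2
    obtain ⟨x, hx, hxe⟩ := hsurj 0 (v + g (θ 1 b) + g (θ 2 c))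
    have hsub : {ω | A 0 ω = x ∧ A 1 ω = b ∧ A 2 ω = c} ⊆ {ω | V ω = v} := by
      rintro ω ⟨h1, h2, h2'⟩
      show V ω = v
      rw [hVdef, h1, h2, h2', hxe]; abel
    have hpos : 0 < Pr p {ω | A 0 ω = x ∧ A 1 ω = b ∧ A 2 ω = c} := by
      rw [pr_triple h3]
      exact mul_pos (mul_pos (hmem 0 x hx) (hmem 1 b hb)) (hmem 2 c hc)
    exact lt_of_lt_of_le hpos (pr_mono hp hsub)
  have hposW : ∀ w : 𝒜, 0 < Pr p {ω | W ω = w} := by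
    intro w
    obtain ⟨b, hb⟩ := hne 1
    obtain ⟨c, hc⟩ := hne 2
    obtain ⟨x, hx, hxe⟩ := hsurj 0 (w + g (θ 1 b) - θ 2 c)
    have hsub : {ω | A 0 ω = x ∧ A 1 ω = b ∧ A 2 ω = c} ⊆ {ω | W ω = w} := by
      rintro ω ⟨h1, h2, h2'⟩
      show W ω = w
      rw [hWdef, h1, h2, h2', hxe]; abel
    have hpos : 0 < Pr p {ω | A 0 ω = x ∧ A 1 ω = b ∧ A 2 ω = c} := by
      rw [pr_triple h3]
      exact mul_pos (mul_pos (hmem 0 x hx) (hmem 1 b hb)) (hmem 2 c hc)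
    exact lt_of_lt_of_le hpos (pr_mono hp hsub)
  have hcard : ∀ X : Ω → 𝒜, (∀ u, 0 < Pr p {ω | X ω = u}) →
      (supp p X).ncard = Fintype.card 𝒜 := by
    intro X hX
    have : supp p X = Set.univ := Set.eq_univ_of_forall fun u => hX u
    rw [this, Set.ncard_univ, Nat.card_eq_fintype_card]
  have pr_univ_eq : ∀ S : Set Ω, S = Set.univ → Pr p S = 1 := fun S h => h ▸ hp.2
  refine ⟨⟨hcard U hposU, hcard V hposV, hcard W hposW⟩, ?_, ?_, ?_, ?_, ?_⟩
  · -- U ≐ A_1 | A_2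
    constructor
    · exact ⟨fun q => θ 0 q.2 - g (θ 1 q.1),
        pr_univ_eq _ (Set.eq_univ_of_forall fun ω => rfl)⟩
    · refine ⟨fun q => inv0 (q.2 + g (θ 1 q.1)),
        pr_superset hp ?_ (pr_mem_supp hp (A 0))⟩
      intro ω hω
      show A 0 ω = inv0 (U ω + g (θ 1 (A 1 ω)))
      have h : U ω + g (θ 1 (A 1 ω)) = θ 0 (A 0 ω) := by rw [hUdef]; abel
      rw [h, hinv0 _ hω]
  · -- V ≐ A_1 | A_23
    constructor
    · refine ⟨fun q => θ 0 q.2 - g (θ 5 q.1), pr_superset hp ?_ hL⟩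
      rintro ω ⟨-, -, h5, -⟩
      show V ω = θ 0 (A 0 ω) - g (θ 5 (A 5 ω))
      rw [hVdef, h5, hg]; abel
    · refine ⟨fun q => inv0 (q.2 + g (θ 5 q.1)),
        pr_superset hp ?_ (pr_inter hp hL (pr_mem_supp hp (A 0)))⟩
      rintro ω ⟨⟨-, -, h5, -⟩, hω⟩
      show A 0 ω = inv0 (V ω + g (θ 5 (A 5 ω)))
      have h : V ω + g (θ 5 (A 5 ω)) = θ 0 (A 0 ω) := by
        rw [hVdef, h5, hg]; abel
      rw [h, hinv0 _ hω]
  · -- U ≐ V | A_3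
    constructor
    · refine ⟨fun q => q.2 + g (θ 2 q.1),
        pr_univ_eq _ (Set.eq_univ_of_forall fun ω => ?_)⟩
      show U ω = V ω + g (θ 2 (A 2 ω))
      rw [hUdef, hVdef]; abel
    · refine ⟨fun q => q.2 - g (θ 2 q.1),
        pr_univ_eq _ (Set.eq_univ_of_forall fun ω => ?_)⟩
      show V ω = U ω - g (θ 2 (A 2 ω))
      rw [hUdef, hVdef]
  · -- W ≐ A_13 | A_2
    constructor
    · refine ⟨fun q => θ 4 q.2 - g (θ 1 q.1), pr_superset hp ?_ hL⟩
      rintro ω ⟨-, h4, -, -⟩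
      show W ω = θ 4 (A 4 ω) - g (θ 1 (A 1 ω))
      rw [hWdef, h4]; abel
    · refine ⟨fun q => inv4 (q.2 + g (θ 1 q.1)),
        pr_superset hp ?_ (pr_inter hp hL (pr_mem_supp hp (A 4)))⟩
      rintro ω ⟨⟨-, h4, -, -⟩, hω⟩
      show A 4 ω = inv4 (W ω + g (θ 1 (A 1 ω)))
      have h : W ω + g (θ 1 (A 1 ω)) = θ 4 (A 4 ω) := by
        rw [hWdef, h4]; abel
      rw [h, hinv4 _ hω]
  · -- U ≐ W | A_3
    constructor
    · refine ⟨fun q => q.2 - θ 2 q.1,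
        pr_univ_eq _ (Set.eq_univ_of_forall fun ω => ?_)⟩
      show U ω = W ω - θ 2 (A 2 ω)
      rw [hUdef, hWdef]; abel
    · refine ⟨fun q => q.2 + θ 2 q.1,
        pr_univ_eq _ (Set.eq_univ_of_forall fun ω => ?_)⟩
      show W ω = U ω + θ 2 (A 2 ω)
      rw [hUdef, hWdef]


end
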